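/- For the optimal weight vector w*_i = (1/k)[1 + d/2 - (d/(2 k^{2/d}))·α_i] (i = 1,...,k, zero otherwise), the sum of squares satisfies k·∑_{i=1}^k (w*_i)^2 → 2(d+2)/(d+4) as k → ∞. -/

import Mathlib

open Filter

open Finset Real in
private lemma mvt_rpow {q : ℝ} (hq : 1 ≤ q) {a : ℝ} (ha : 0 ≤ a) :
    q * a ^ (q - 1) ≤ (a + 1) ^ q - a ^ q ∧
      (a + 1) ^ q - a ^ q ≤ q * (a + 1) ^ (q - 1) := by
  have hderiv : ∀ x : ℝ, HasDerivAt (fun x : ℝ => x ^ q) (q * x ^ (q - 1)) x := by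
    intro x
    simpa using Real.hasDerivAt_rpow_const (p := q) (x := x) (Or.inr hq)
  obtain ⟨ξ, hξ, hslope⟩ := exists_hasDerivAt_eq_slope (fun x : ℝ => x ^ q)
    (fun x => q * x ^ (q - 1)) (by linarith : a < a + 1)
    (fun x _ => (hderiv x).continuousAt.continuousWithinAt)
    (fun x _ => hderiv x)
  have hslope' : q * ξ ^ (q - 1) = (a + 1) ^ q - a ^ q := by
    simpa using hslope
  have h1 : (0:ℝ) ≤ q - 1 := by linarith
  have hq0 : (0:ℝ) ≤ q := by linarith
  have hξ0 : 0 ≤ ξ := le_of_lt (lt_of_le_of_lt ha hξ.1)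
  constructor
  · rw [← hslope']
    exact mul_le_mul_of_nonneg_left (Real.rpow_le_rpow ha hξ.1.le h1) hq0
  · rw [← hslope']
    exact mul_le_mul_of_nonneg_left (Real.rpow_le_rpow hξ0 hξ.2.le h1) hq0

open Finset Real in
private lemma sum_upper {q : ℝ} (hq : 1 ≤ q) (k : ℕ) :
    ∑ i ∈ Finset.Icc 1 k, (i:ℝ) ^ (q-1) ≤ ((k:ℝ)+1) ^ q / q := by
  have hq0 : (0:ℝ) < q := by linarith
  induction k with
  | zero => simp; positivity
  | succ k ih =>
    rw [Finset.sum_Icc_succ_top (by omega)]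
    rw [le_div_iff₀ hq0]
    have h := (mvt_rpow hq (a := (k:ℝ)+1) (by positivity)).1
    have h2 := (le_div_iff₀ hq0).mp ih
    push_cast
    nlinarith [h, h2]

private lemma sum_lower_shift {q : ℝ} (hq : 1 ≤ q) (k : ℕ) (hk : 1 ≤ k) :
    ((k:ℝ)-1) ^ q / q ≤ ∑ i ∈ Finset.Icc 1 k, ((i:ℝ)-1) ^ (q-1) := by
  have hq0 : (0:ℝ) < q := by linarith
  induction k, hk using Nat.le_induction with
  | base =>
    simp [Real.zero_rpow hq0.ne']
    positivity
  | succ k hk ih =>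
    rw [Finset.sum_Icc_succ_top (by omega)]
    rw [div_le_iff₀ hq0]
    have h := (mvt_rpow hq (a := (k:ℝ)-1) (by
      have : (1:ℝ) ≤ (k:ℝ) := by exact_mod_cast hk
      linarith)).2
    have h2 := (div_le_iff₀ hq0).mp ih
    have hk1 : ((k:ℝ)-1) + 1 = (k:ℝ) := by ring
    rw [hk1] at h
    push_cast
    rw [show ((k:ℝ) + 1 - 1) = (k:ℝ) from by ring]
    nlinarith [h, h2]

open Finset Real in
private lemma sum_alpha {c : ℝ} (hc : 0 < c) (k : ℕ) :
    ∑ i ∈ Finset.Icc 1 k, ((i:ℝ)^c - ((i:ℝ)-1)^c) = (k:ℝ)^c := by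
  induction k with
  | zero => simp [Real.zero_rpow hc.ne']
  | succ k ih =>
    rw [Finset.sum_Icc_succ_top (by omega), ih]
    push_cast
    ring

private lemma key {c : ℝ} (hc : 1 < c) :
    Tendsto (fun k : ℕ =>
        (∑ i ∈ Finset.Icc 1 k, ((i:ℝ)^c - ((i:ℝ)-1)^c)^2) / (k:ℝ)^(2*c-1))
      atTop (nhds (c^2/(2*c-1))) := by
  set q : ℝ := 2*c - 1 with hqdef
  have hq : 1 ≤ q := by simp only [hqdef]; linarith
  have hq0 : (0:ℝ) < q := by linarith
  have hc0 : (0:ℝ) < c := by linarith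
  -- limit of bounding sequences
  have hlim : ∀ s : ℝ, Tendsto (fun k : ℕ => ((k:ℝ)+s)/(k:ℝ)) atTop (nhds 1) := by
    intro s
    have h1 : Tendsto (fun k : ℕ => 1 + s/(k:ℝ)) atTop (nhds (1 + 0)) :=
      tendsto_const_nhds.add (tendsto_const_nhds.div_atTop tendsto_natCast_atTop_atTop)
    rw [add_zero] at h1
    apply h1.congr'
    filter_upwards [eventually_ge_atTop 1] with k hk
    have hk0 : (k:ℝ) ≠ 0 := by positivity
    field_simp
  have hcont : ContinuousAt (fun x : ℝ => x ^ q) 1 :=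
    Real.continuousAt_rpow_const 1 q (Or.inl one_ne_zero)
  have hrlim : ∀ s : ℝ, Tendsto (fun k : ℕ => c^2/q * (((k:ℝ)+s)/(k:ℝ))^q)
      atTop (nhds (c^2/q)) := by
    intro s
    have := (hcont.tendsto.comp (hlim s)).const_mul (c^2/q)
    simpa [Function.comp, Real.one_rpow] using this
  -- squeeze
  have hlow : ∀ᶠ k : ℕ in atTop,
      c^2/q * (((k:ℝ)+(-1))/(k:ℝ))^q ≤
        (∑ i ∈ Finset.Icc 1 k, ((i:ℝ)^c - ((i:ℝ)-1)^c)^2) / (k:ℝ)^q := by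
    filter_upwards [eventually_ge_atTop 1] with k hk
    have hk1 : (1:ℝ) ≤ (k:ℝ) := by exact_mod_cast hk
    have hk0 : (0:ℝ) < (k:ℝ) := by linarith
    have hkq : (0:ℝ) < (k:ℝ)^q := Real.rpow_pos_of_pos hk0 q
    have hterm : ∀ i ∈ Finset.Icc 1 k,
        c^2 * ((i:ℝ)-1)^(q-1) ≤ ((i:ℝ)^c - ((i:ℝ)-1)^c)^2 := by
      intro i hi
      have hi1 : 1 ≤ i := (Finset.mem_Icc.mp hi).1
      have hi1' : (1:ℝ) ≤ (i:ℝ) := by exact_mod_cast hi1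
      have ha : (0:ℝ) ≤ (i:ℝ)-1 := by linarith
      have hm := (mvt_rpow hc.le ha).1
      rw [show ((i:ℝ)-1) + 1 = (i:ℝ) from by ring] at hm
      have h0 : (0:ℝ) ≤ c * ((i:ℝ)-1)^(c-1) := by positivity
      have := pow_le_pow_left₀ h0 hm 2
      have e2 : (((i:ℝ)-1)^(c-1))^2 = ((i:ℝ)-1)^(q-1) := by
        rw [← Real.rpow_natCast (((i:ℝ)-1)^(c-1)) 2, ← Real.rpow_mul ha]
        congr 1
        push_cast
        rw [hqdef]; ring
      calc c^2 * ((i:ℝ)-1)^(q-1) = (c * ((i:ℝ)-1)^(c-1))^2 := by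
            rw [mul_pow, e2]
        _ ≤ ((i:ℝ)^c - ((i:ℝ)-1)^c)^2 := this
    have hsum : c^2 * (((k:ℝ)-1)^q / q) ≤
        ∑ i ∈ Finset.Icc 1 k, ((i:ℝ)^c - ((i:ℝ)-1)^c)^2 := by
      calc c^2 * (((k:ℝ)-1)^q / q)
          ≤ c^2 * ∑ i ∈ Finset.Icc 1 k, ((i:ℝ)-1)^(q-1) :=
            mul_le_mul_of_nonneg_left (sum_lower_shift hq k hk) (by positivity)
        _ = ∑ i ∈ Finset.Icc 1 k, c^2 * ((i:ℝ)-1)^(q-1) := Finset.mul_sum _ _ _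
        _ ≤ _ := Finset.sum_le_sum hterm
    have heq : c^2/q * (((k:ℝ)+(-1))/(k:ℝ))^q = c^2 * (((k:ℝ)-1)^q / q) / (k:ℝ)^q := by
      rw [show (k:ℝ)+(-1) = (k:ℝ)-1 from by ring,
        Real.div_rpow (by linarith) hk0.le]
      ring
    rw [heq]
    exact (div_le_div_iff_of_pos_right hkq).mpr hsum
  have hupp : ∀ᶠ k : ℕ in atTop,
      (∑ i ∈ Finset.Icc 1 k, ((i:ℝ)^c - ((i:ℝ)-1)^c)^2) / (k:ℝ)^q ≤
        c^2/q * (((k:ℝ)+1)/(k:ℝ))^q := by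
    filter_upwards [eventually_ge_atTop 1] with k hk
    have hk1 : (1:ℝ) ≤ (k:ℝ) := by exact_mod_cast hk
    have hk0 : (0:ℝ) < (k:ℝ) := by linarith
    have hkq : (0:ℝ) < (k:ℝ)^q := Real.rpow_pos_of_pos hk0 q
    have hterm : ∀ i ∈ Finset.Icc 1 k,
        ((i:ℝ)^c - ((i:ℝ)-1)^c)^2 ≤ c^2 * (i:ℝ)^(q-1) := by
      intro i hi
      have hi1 : 1 ≤ i := (Finset.mem_Icc.mp hi).1
      have hi1' : (1:ℝ) ≤ (i:ℝ) := by exact_mod_cast hi1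
      have ha : (0:ℝ) ≤ (i:ℝ)-1 := by linarith
      have hi0 : (0:ℝ) ≤ (i:ℝ) := by linarith
      have hm := (mvt_rpow hc.le ha).2
      have hm1 := (mvt_rpow hc.le ha).1
      rw [show ((i:ℝ)-1) + 1 = (i:ℝ) from by ring] at hm hm1
      have h0 : (0:ℝ) ≤ (i:ℝ)^c - ((i:ℝ)-1)^c := by
        have : (0:ℝ) ≤ c * ((i:ℝ)-1)^(c-1) := by positivity
        linarith
      have hsq := pow_le_pow_left₀ h0 hm 2
      have e2 : (((i:ℝ))^(c-1))^2 = (i:ℝ)^(q-1) := by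
        rw [← Real.rpow_natCast (((i:ℝ))^(c-1)) 2, ← Real.rpow_mul hi0]
        congr 1
        push_cast
        rw [hqdef]; ring
      calc ((i:ℝ)^c - ((i:ℝ)-1)^c)^2 ≤ (c * (i:ℝ)^(c-1))^2 := hsq
        _ = c^2 * (i:ℝ)^(q-1) := by rw [mul_pow, e2]
    have hsum : (∑ i ∈ Finset.Icc 1 k, ((i:ℝ)^c - ((i:ℝ)-1)^c)^2) ≤
        c^2 * (((k:ℝ)+1)^q / q) := by
      calc (∑ i ∈ Finset.Icc 1 k, ((i:ℝ)^c - ((i:ℝ)-1)^c)^2)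
          ≤ ∑ i ∈ Finset.Icc 1 k, c^2 * (i:ℝ)^(q-1) := Finset.sum_le_sum hterm
        _ = c^2 * ∑ i ∈ Finset.Icc 1 k, (i:ℝ)^(q-1) := (Finset.mul_sum _ _ _).symm
        _ ≤ c^2 * (((k:ℝ)+1)^q / q) :=
            mul_le_mul_of_nonneg_left (sum_upper hq k) (by positivity)
    have heq : c^2/q * (((k:ℝ)+1)/(k:ℝ))^q = c^2 * (((k:ℝ)+1)^q / q) / (k:ℝ)^q := by
      rw [Real.div_rpow (by linarith) hk0.le]
      ring
    rw [heq]
    exact (div_le_div_iff_of_pos_right hkq).mpr hsum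
  exact tendsto_of_tendsto_of_tendsto_of_le_of_le' (hrlim (-1)) (hrlim 1) hlow hupp

theorem opt_weights_sum_sq_limit (d : ℕ) (hd : 0 < d) :
    Tendsto (fun k : ℕ =>
      (k : ℝ) * ∑ i ∈ Finset.Icc 1 k,
        ((1 / (k : ℝ)) * (1 + (d : ℝ) / 2 -
          ((d : ℝ) / (2 * (k : ℝ) ^ (2 / (d : ℝ)))) *
            ((i : ℝ) ^ (1 + 2 / (d : ℝ)) - ((i : ℝ) - 1) ^ (1 + 2 / (d : ℝ))))) ^ 2)
      atTop (nhds (2 * ((d : ℝ) + 2) / ((d : ℝ) + 4))) := by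
  have hdr : (0:ℝ) < (d:ℝ) := by exact_mod_cast hd
  set e : ℝ := 2 / (d:ℝ) with he
  have he0 : 0 < e := by positivity
  set c : ℝ := 1 + e with hcdef
  have hc : 1 < c := by rw [hcdef]; linarith
  have hc0 : 0 < c := by linarith
  set q : ℝ := 2*c - 1 with hqdef
  have hq0 : 0 < q := by rw [hqdef]; linarith
  have hkey := key hc
  rw [← hqdef] at hkey
  set A : ℝ := 1 + (d:ℝ)/2 with hA
  have hlim : Tendsto (fun k : ℕ => A^2 - A*(d:ℝ) + (d:ℝ)^2/4 *
      ((∑ i ∈ Finset.Icc 1 k, ((i:ℝ)^c - ((i:ℝ)-1)^c)^2) / (k:ℝ)^q))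
      atTop (nhds (A^2 - A*(d:ℝ) + (d:ℝ)^2/4 * (c^2/q))) :=
    tendsto_const_nhds.add (hkey.const_mul _)
  have hval : A^2 - A*(d:ℝ) + (d:ℝ)^2/4 * (c^2/q) = 2*((d:ℝ)+2)/((d:ℝ)+4) := by
    have h4 : (d:ℝ) + 4 ≠ 0 := by linarith
    have hdne : (d:ℝ) ≠ 0 := hdr.ne'
    have hc' : c = ((d:ℝ)+2)/(d:ℝ) := by rw [hcdef, he]; field_simp
    have hq' : q = ((d:ℝ)+4)/(d:ℝ) := by rw [hqdef, hcdef, he]; field_simp; ring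
    rw [hA, hc', hq', div_pow, div_div_eq_mul_div]
    field_simp
    ring
  rw [← hval]
  apply hlim.congr'
  filter_upwards [eventually_ge_atTop 1] with k hk
  have hk1 : (1:ℝ) ≤ (k:ℝ) := by exact_mod_cast hk
  have hk0 : (0:ℝ) < (k:ℝ) := by linarith
  set x : ℝ := (k:ℝ)^e with hxdef
  have hx : 0 < x := Real.rpow_pos_of_pos hk0 e
  have hkc : (k:ℝ)^c = x * (k:ℝ) := by
    rw [hcdef, Real.rpow_add hk0, Real.rpow_one, hxdef]; ring
  have hkq : (k:ℝ)^q = x^2 * (k:ℝ) := by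
    rw [show q = e + (e + 1) from by rw [hqdef, hcdef]; ring,
      Real.rpow_add hk0, Real.rpow_add hk0, Real.rpow_one, hxdef]; ring
  have hsum1 : ∀ i : ℕ,
      ((1/(k:ℝ)) * (A - (d:ℝ)/(2*x) * ((i:ℝ)^c - ((i:ℝ)-1)^c)))^2
        = (1/(k:ℝ))^2*A^2 - (1/(k:ℝ))^2*(A*(d:ℝ)/x) * ((i:ℝ)^c - ((i:ℝ)-1)^c)
          + (1/(k:ℝ))^2*((d:ℝ)^2/(4*x^2)) * ((i:ℝ)^c - ((i:ℝ)-1)^c)^2 := by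
    intro i; ring
  show A^2 - A*(d:ℝ) + (d:ℝ)^2/4 *
      ((∑ i ∈ Finset.Icc 1 k, ((i:ℝ)^c - ((i:ℝ)-1)^c)^2) / (k:ℝ)^q)
    = (k:ℝ) * ∑ i ∈ Finset.Icc 1 k,
        ((1/(k:ℝ)) * (A - (d:ℝ)/(2*x) * ((i:ℝ)^c - ((i:ℝ)-1)^c)))^2
  have h2 : ∑ i ∈ Finset.Icc 1 k,
      ((1/(k:ℝ)) * (A - (d:ℝ)/(2*x) * ((i:ℝ)^c - ((i:ℝ)-1)^c)))^2
      = (k:ℝ) * ((1/(k:ℝ))^2*A^2)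
        - (1/(k:ℝ))^2*(A*(d:ℝ)/x) * ((k:ℝ)^c)
        + (1/(k:ℝ))^2*((d:ℝ)^2/(4*x^2)) *
            (∑ i ∈ Finset.Icc 1 k, ((i:ℝ)^c - ((i:ℝ)-1)^c)^2) := by
    rw [Finset.sum_congr rfl (fun i _ => hsum1 i), Finset.sum_add_distrib,
      Finset.sum_sub_distrib, Finset.sum_const, ← Finset.mul_sum, ← Finset.mul_sum,
      sum_alpha hc0, Nat.card_Icc]
    simp [nsmul_eq_mul, Nat.add_sub_cancel]
  rw [h2, hkc, hkq]
  have hkne : (k:ℝ) ≠ 0 := hk0.ne'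
  have hxne : x ≠ 0 := hx.ne'
  field_simp
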